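/- If (A, ∘) is a Novikov superalgebra and [u,v] = u∘v − (−1)^{|u||v|} v∘u is the supercommutator, then (A, [·,·], ∘) is a super Gel'fand-Dorfman algebra; in particular the compatibility identity [w∘u, v] − (−1)^{ij}[w∘v, u] + [w,u]∘v − (−1)^{ij}[w,v]∘u − w∘[u,v] = 0 holds for all homogeneous u ∈ A_i, v ∈ A_j and w ∈ A. -/

import Mathlib

/-- A Novikov superalgebra over ℂ: a ℤ₂-graded vector space `V = A 0 ⊕ A 1`
with a bilinear product respecting the grading, satisfying the graded
left-symmetry and graded right-commutativity identities. -/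
structure NovikovSuperAlgebra (V : Type*) [AddCommGroup V] [Module ℂ V] where
  mul : V →ₗ[ℂ] V →ₗ[ℂ] V
  grading : ZMod 2 → Submodule ℂ V
  spanning : ∀ x : V, ∃ x0 ∈ grading 0, ∃ x1 ∈ grading 1, x = x0 + x1
  indep : ∀ x : V, x ∈ grading 0 → x ∈ grading 1 → x = 0
  mul_mem : ∀ i j : ZMod 2, ∀ u ∈ grading i, ∀ v ∈ grading j, mul u v ∈ grading (i + j)
  super_left_sym : ∀ i j : ZMod 2, ∀ u ∈ grading i, ∀ v ∈ grading j, ∀ w : V,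
    mul (mul u v) w - mul u (mul v w)
      = ((-1 : ℂ) ^ (i.val * j.val)) • (mul (mul v u) w - mul v (mul u w))
  super_right_comm : ∀ i j : ZMod 2, ∀ u ∈ grading i, ∀ v ∈ grading j, ∀ w : V,
    mul (mul w u) v = ((-1 : ℂ) ^ (i.val * j.val)) • mul (mul w v) u

/-- The (ungraded) Novikov algebra identities for a bilinear product. -/
def IsNovikovMul {V : Type*} [AddCommGroup V] [Module ℂ V]
    (mul : V →ₗ[ℂ] V →ₗ[ℂ] V) : Prop :=
  (∀ x y z : V, mul (mul x y) z - mul x (mul y z) = mul (mul y x) z - mul y (mul x z)) ∧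
  (∀ x y z : V, mul (mul z x) y = mul (mul z y) x)

/-- Supercommutator of elements of parities `i`, `j`. -/
def sbr {V : Type*} [AddCommGroup V] [Module ℂ V]
    (mul : V →ₗ[ℂ] V →ₗ[ℂ] V) (i j : ZMod 2) (u v : V) : V :=
  mul u v - ((-1 : ℂ) ^ (i.val * j.val)) • mul v u

/-- `ZMod.val` of `0` in `ZMod 2`. -/
lemma zval_zero : ZMod.val (0 : ZMod 2) = 0 := rfl
/-- `ZMod.val` of `1` in `ZMod 2`. -/
lemma zval_one : ZMod.val (1 : ZMod 2) = 1 := rfl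
/-- `ZMod.val` of `2` in `ZMod 2`. -/
lemma zval_two : ZMod.val (2 : ZMod 2) = 0 := rfl
/-- `ZMod.val` of `1 + 1` in `ZMod 2`. -/
lemma zval_one_add_one : ZMod.val (1 + 1 : ZMod 2) = 0 := rfl
/-- Fin-literal `0` produced by `fin_cases` in `ZMod 2`. -/
lemma zmk_zero (h : 0 < 1 + 1) : ((fun i => i) (⟨0, h⟩ : Fin (1 + 1)) : ZMod 2) = 0 := rfl
/-- Fin-literal `1` produced by `fin_cases` in `ZMod 2`. -/
lemma zmk_one (h : 1 < 1 + 1) : ((fun i => i) (⟨1, h⟩ : Fin (1 + 1)) : ZMod 2) = 1 := rfl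

/-- a Novikov superalgebra together with its supercommutator is a
super Gel'fand-Dorfman algebra: the supercommutator is a Lie super bracket
(super-antisymmetry and super Jacobi) and the compatibility identity
`[w∘u,v] − (−1)^{ij}[w∘v,u] + [w,u]∘v − (−1)^{ij}[w,v]∘u − w∘[u,v] = 0` holds. -/
theorem novikov_super_gelfand_dorfman {V : Type*} [AddCommGroup V] [Module ℂ V]
    (N : NovikovSuperAlgebra V) :
    (∀ i j : ZMod 2, ∀ u ∈ N.grading i, ∀ v ∈ N.grading j,
      sbr N.mul i j u v = -(((-1 : ℂ) ^ (i.val * j.val)) • sbr N.mul j i v u)) ∧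
    (∀ i j k : ZMod 2, ∀ u ∈ N.grading i, ∀ v ∈ N.grading j, ∀ w ∈ N.grading k,
      ((-1 : ℂ) ^ (i.val * k.val)) • sbr N.mul i (j + k) u (sbr N.mul j k v w)
        + ((-1 : ℂ) ^ (j.val * i.val)) • sbr N.mul j (k + i) v (sbr N.mul k i w u)
        + ((-1 : ℂ) ^ (k.val * j.val)) • sbr N.mul k (i + j) w (sbr N.mul i j u v) = 0) ∧
    (∀ i j k : ZMod 2, ∀ u ∈ N.grading i, ∀ v ∈ N.grading j, ∀ w ∈ N.grading k,
      sbr N.mul (k + i) j (N.mul w u) v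
        - ((-1 : ℂ) ^ (i.val * j.val)) • sbr N.mul (k + j) i (N.mul w v) u
        + N.mul (sbr N.mul k i w u) v
        - ((-1 : ℂ) ^ (i.val * j.val)) • N.mul (sbr N.mul k j w v) u
        - N.mul w (sbr N.mul i j u v) = 0) := by
  refine ⟨?_, ?_, ?_⟩
  · -- super-antisymmetry of the supercommutator
    intro i j u hu v hv
    simp only [sbr]
    match_scalars <;>
      fin_cases i <;> fin_cases j <;> simp only [zmk_zero, zmk_one] <;>
        norm_num [zval_zero, zval_one, zval_two, zval_one_add_one]
  · -- super Jacobi identity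
    intro i j k u hu v hv w hw
    have H1 := N.super_left_sym i j u hu v hv w
    have H2 := N.super_left_sym j k v hv w hw u
    have H3 := N.super_left_sym k i w hw u hu v
    simp only [sbr, map_sub, map_smul, LinearMap.sub_apply, LinearMap.smul_apply]
    linear_combination (norm := (match_scalars <;>
        (fin_cases i <;> fin_cases j <;> fin_cases k <;> simp only [zmk_zero, zmk_one] <;>
          norm_num [zval_zero, zval_one, zval_two, zval_one_add_one])))
      (-((-1:ℂ) ^ (k.val * i.val))) • H1 + (-((-1:ℂ) ^ (i.val * j.val))) • H2
        + (-((-1:ℂ) ^ (j.val * k.val))) • H3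
  · -- compatibility identity
    intro i j k u hu v hv w hw
    have RC := N.super_right_comm i j u hu v hv w
    have H2 := N.super_left_sym i k u hu w hw v
    have H3 := N.super_left_sym j k v hv w hw u
    simp only [sbr, map_sub, map_smul, LinearMap.sub_apply, LinearMap.smul_apply]
    linear_combination (norm := (match_scalars <;>
        (fin_cases i <;> fin_cases j <;> fin_cases k <;> simp only [zmk_zero, zmk_one] <;>
          norm_num [zval_zero, zval_one, zval_two, zval_one_add_one])))
      RC - ((-1:ℂ) ^ (i.val * k.val)) • H2
        + (((-1:ℂ) ^ (i.val * j.val)) * ((-1:ℂ) ^ (k.val * j.val))) • H3
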